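/- A function F : F_{2^n} → F_{2^n} is an o-polynomial if and only if both: (i) Σ_{b ∈ F_{2^n}^*} Σ_{v ∈ F_{2^n}} W_F(bv,v)^2 = (2^n − 1)·2^{2n+1}, and (ii) Σ_{b ∈ F_{2^n}^*} Σ_{v_1,v_2 ∈ F_{2^n}} W_F(b v_1, v_1)·W_F(b v_2, v_2)·W_F(b(v_1+v_2), v_1+v_2) = (2^n − 1)·2^{3n+2}. -/

import Mathlib

open scoped Classical
open Finset

noncomputable instance (n : ℕ) : Fintype (GaloisField 2 n) := Fintype.ofFinite _

/-- The absolute trace from `GF(2^n)` to `GF(2)`. -/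
noncomputable def tr (n : ℕ) (x : GaloisField 2 n) : ZMod 2 :=
  Algebra.trace (ZMod 2) (GaloisField 2 n) x

/-- The Walsh transform of `F` at `(u, v)`. -/
noncomputable def W (n : ℕ) (F : GaloisField 2 n → GaloisField 2 n)
    (u v : GaloisField 2 n) : ℤ :=
  ∑ x : GaloisField 2 n, (-1 : ℤ) ^ (tr n (v * F x) + tr n (u * x)).val

/-- `F` is an o-polynomial: for every nonzero `b` and every `a`, the equation
`F x + b * x = a` has 0 or 2 solutions. -/
def IsOPoly (n : ℕ) (F : GaloisField 2 n → GaloisField 2 n) : Prop :=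
  ∀ b : GaloisField 2 n, b ≠ 0 → ∀ a : GaloisField 2 n,
    Nat.card {x : GaloisField 2 n // F x + b * x = a} = 0 ∨
    Nat.card {x : GaloisField 2 n // F x + b * x = a} = 2

noncomputable def chi (n : ℕ) (x : GaloisField 2 n) : ℤ := (-1) ^ (tr n x).val

lemma zmod2_aux (s t : ZMod 2) : (-1:ℤ)^(s+t).val = (-1:ℤ)^s.val*(-1:ℤ)^t.val := by revert s t; decide

lemma zmod2_ne (s : ZMod 2) (h : s ≠ 0) : s = 1 := by revert s h; decide

lemma chi_add (n : ℕ) (x y : GaloisField 2 n) : chi n (x+y) = chi n x * chi n y := by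
  unfold chi tr; rw [map_add]; exact zmod2_aux _ _

lemma chi_zero (n : ℕ) : chi n 0 = 1 := by
  unfold chi tr; rw [map_zero]; rfl

lemma cardK (n : ℕ) (hn : 0 < n) : Fintype.card (GaloisField 2 n) = 2 ^ n := by
  rw [← Nat.card_eq_fintype_card]; exact GaloisField.card 2 n hn.ne'

lemma sum_chi (n : ℕ) (hn : 0 < n) (c : GaloisField 2 n) :
    ∑ v : GaloisField 2 n, chi n (v * c) = if c = 0 then (2:ℤ)^n else 0 := by
  split_ifs with hc
  · subst hc
    simp [mul_zero, chi_zero, cardK n hn]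
  · -- find v₀ with tr (v₀ * c) ≠ 0
    obtain ⟨v₀, hv₀⟩ : ∃ v₀, tr n (v₀ * c) ≠ 0 := by
      by_contra hall
      push_neg at hall
      refine hc ((traceForm_nondegenerate (ZMod 2) (GaloisField 2 n)).1 c fun m => ?_)
      have := hall m
      simpa [Algebra.traceForm_apply, tr, mul_comm] using this
    have htr1 : tr n (v₀ * c) = 1 := zmod2_ne _ hv₀
    have hchi : chi n (v₀ * c) = -1 := by simp [chi, htr1]; decide
    have key : ∑ v : GaloisField 2 n, chi n ((v + v₀) * c)
        = ∑ v : GaloisField 2 n, chi n (v * c) :=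
      Fintype.sum_equiv (Equiv.addRight v₀) _ _ (fun v => rfl)
    have key2 : ∑ v : GaloisField 2 n, chi n ((v + v₀) * c)
        = -∑ v : GaloisField 2 n, chi n (v * c) := by
      simp only [add_mul, chi_add, hchi, mul_neg_one, Finset.sum_neg_distrib]
    linarith [key, key2]

noncomputable def Nc (n : ℕ) (G : GaloisField 2 n → GaloisField 2 n)
    (a : GaloisField 2 n) : ℕ := (univ.filter (fun x => G x = a)).card

lemma sum_fiber (n : ℕ) (G : GaloisField 2 n → GaloisField 2 n) (φ : GaloisField 2 n → ℤ) :
    ∑ x : GaloisField 2 n, φ (G x) = ∑ a : GaloisField 2 n, (Nc n G a : ℤ) * φ a := by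
  rw [← Finset.sum_fiberwise univ G (fun x => φ (G x))]
  refine Finset.sum_congr rfl fun a _ => ?_
  rw [Finset.sum_congr rfl (fun x hx => by rw [(Finset.mem_filter.mp hx).2] :
    ∀ x ∈ univ.filter (fun x => G x = a), φ (G x) = φ a), Finset.sum_const]
  simp [Nc, nsmul_eq_mul]

lemma sum_Nc (n : ℕ) (hn : 0 < n) (G : GaloisField 2 n → GaloisField 2 n) :
    ∑ a : GaloisField 2 n, (Nc n G a : ℤ) = 2^n := by
  have := sum_fiber n G (fun _ => (1:ℤ))
  simp only [mul_one, Finset.sum_const, Finset.card_univ, nsmul_eq_mul] at this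
  rw [← this, cardK n hn]; push_cast; ring

lemma addK_eq_zero (n : ℕ) (x y : GaloisField 2 n) : x + y = 0 ↔ y = x := by
  rw [add_eq_zero_iff_eq_neg, CharTwo.neg_eq, eq_comm]

lemma ite_sum_count (n : ℕ) (G : GaloisField 2 n → GaloisField 2 n)
    (c : GaloisField 2 n) (q : ℤ) :
    ∑ y : GaloisField 2 n, (if G y = c then q else 0) = (Nc n G c : ℤ) * q := by
  rw [Finset.sum_ite, Finset.sum_const_zero, add_zero, Finset.sum_const]
  simp [Nc, mul_comm]

lemma moment2 (n : ℕ) (hn : 0 < n) (G : GaloisField 2 n → GaloisField 2 n) :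
    ∑ v : GaloisField 2 n, (∑ x : GaloisField 2 n, chi n (v * G x))^2
      = 2^n * ∑ a : GaloisField 2 n, (Nc n G a : ℤ)^2 := by
  have step1 : ∀ v : GaloisField 2 n, (∑ x : GaloisField 2 n, chi n (v * G x))^2
      = ∑ x : GaloisField 2 n, ∑ y : GaloisField 2 n, chi n (v * (G x + G y)) := by
    intro v
    rw [sq, Finset.sum_mul_sum]
    exact Finset.sum_congr rfl fun x _ => Finset.sum_congr rfl fun y _ => by
      rw [mul_add, chi_add]
  calc ∑ v : GaloisField 2 n, (∑ x : GaloisField 2 n, chi n (v * G x))^2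
      = ∑ v : GaloisField 2 n, ∑ x : GaloisField 2 n, ∑ y : GaloisField 2 n,
          chi n (v * (G x + G y)) := Finset.sum_congr rfl fun v _ => step1 v
    _ = ∑ x : GaloisField 2 n, ∑ v : GaloisField 2 n, ∑ y : GaloisField 2 n,
          chi n (v * (G x + G y)) := Finset.sum_comm
    _ = ∑ x : GaloisField 2 n, ∑ y : GaloisField 2 n, ∑ v : GaloisField 2 n,
          chi n (v * (G x + G y)) := Finset.sum_congr rfl fun x _ => Finset.sum_comm
    _ = ∑ x : GaloisField 2 n, ∑ y : GaloisField 2 n,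
          (if G y = G x then (2:ℤ)^n else 0) := by
        refine Finset.sum_congr rfl fun x _ => Finset.sum_congr rfl fun y _ => ?_
        rw [sum_chi n hn, addK_eq_zero]
    _ = ∑ x : GaloisField 2 n, (Nc n G (G x) : ℤ) * 2^n := by
        exact Finset.sum_congr rfl fun x _ => ite_sum_count n G (G x) _
    _ = ∑ a : GaloisField 2 n, (Nc n G a : ℤ) * ((Nc n G a : ℤ) * 2^n) :=
        sum_fiber n G (fun a => (Nc n G a : ℤ) * 2^n)
    _ = 2^n * ∑ a : GaloisField 2 n, (Nc n G a : ℤ)^2 := by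
        rw [Finset.mul_sum]; exact Finset.sum_congr rfl fun a _ => by ring

lemma sum_comm3 {M : Type*} [AddCommMonoid M] {ι : Type*} [Fintype ι] (f : ι → ι → ι → M) :
    ∑ a, ∑ b, ∑ c, f a b c = ∑ c, ∑ a, ∑ b, f a b c := by
  calc ∑ a, ∑ b, ∑ c, f a b c
      = ∑ a, ∑ c, ∑ b, f a b c := Finset.sum_congr rfl fun a _ => Finset.sum_comm
    _ = ∑ c, ∑ a, ∑ b, f a b c := Finset.sum_comm

lemma moment3 (n : ℕ) (hn : 0 < n) (G : GaloisField 2 n → GaloisField 2 n) :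
    ∑ v₁ : GaloisField 2 n, ∑ v₂ : GaloisField 2 n,
        (∑ x : GaloisField 2 n, chi n (v₁ * G x)) *
        (∑ y : GaloisField 2 n, chi n (v₂ * G y)) *
        (∑ z : GaloisField 2 n, chi n ((v₁ + v₂) * G z))
      = 2^n * 2^n * ∑ a : GaloisField 2 n, (Nc n G a : ℤ)^3 := by
  have step1 : ∀ v₁ v₂ : GaloisField 2 n,
      (∑ x : GaloisField 2 n, chi n (v₁ * G x)) *
      (∑ y : GaloisField 2 n, chi n (v₂ * G y)) *
      (∑ z : GaloisField 2 n, chi n ((v₁ + v₂) * G z))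
      = ∑ x : GaloisField 2 n, ∑ y : GaloisField 2 n, ∑ z : GaloisField 2 n,
          chi n (v₁ * G x) * chi n (v₂ * G y) * chi n ((v₁ + v₂) * G z) := by
    intro v₁ v₂
    rw [Finset.sum_mul_sum, Finset.sum_mul]
    refine Finset.sum_congr rfl fun x _ => ?_
    rw [Finset.sum_mul]
    exact Finset.sum_congr rfl fun y _ => Finset.mul_sum _ _ _
  have key : ∀ v₁ v₂ x y z : GaloisField 2 n,
      chi n (v₁ * G x) * chi n (v₂ * G y) * chi n ((v₁ + v₂) * G z)
      = chi n (v₁ * (G x + G z)) * chi n (v₂ * (G y + G z)) := by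
    intro v₁ v₂ x y z
    rw [mul_add, mul_add, add_mul, chi_add, chi_add, chi_add]
    ring
  calc ∑ v₁ : GaloisField 2 n, ∑ v₂ : GaloisField 2 n,
        (∑ x : GaloisField 2 n, chi n (v₁ * G x)) *
        (∑ y : GaloisField 2 n, chi n (v₂ * G y)) *
        (∑ z : GaloisField 2 n, chi n ((v₁ + v₂) * G z))
      = ∑ v₁ : GaloisField 2 n, ∑ v₂ : GaloisField 2 n, ∑ x : GaloisField 2 n,
          ∑ y : GaloisField 2 n, ∑ z : GaloisField 2 n,
          chi n (v₁ * G x) * chi n (v₂ * G y) * chi n ((v₁ + v₂) * G z) :=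
        Finset.sum_congr rfl fun v₁ _ => Finset.sum_congr rfl fun v₂ _ => step1 v₁ v₂
    _ = ∑ x : GaloisField 2 n, ∑ v₁ : GaloisField 2 n, ∑ v₂ : GaloisField 2 n,
          ∑ y : GaloisField 2 n, ∑ z : GaloisField 2 n,
          chi n (v₁ * G x) * chi n (v₂ * G y) * chi n ((v₁ + v₂) * G z) :=
        sum_comm3 _
    _ = ∑ x : GaloisField 2 n, ∑ y : GaloisField 2 n, ∑ v₁ : GaloisField 2 n,
          ∑ v₂ : GaloisField 2 n, ∑ z : GaloisField 2 n,
          chi n (v₁ * G x) * chi n (v₂ * G y) * chi n ((v₁ + v₂) * G z) :=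
        Finset.sum_congr rfl fun x _ => sum_comm3 _
    _ = ∑ x : GaloisField 2 n, ∑ y : GaloisField 2 n, ∑ z : GaloisField 2 n,
          ∑ v₁ : GaloisField 2 n, ∑ v₂ : GaloisField 2 n,
          chi n (v₁ * G x) * chi n (v₂ * G y) * chi n ((v₁ + v₂) * G z) :=
        Finset.sum_congr rfl fun x _ => Finset.sum_congr rfl fun y _ => sum_comm3 _
    _ = ∑ x : GaloisField 2 n, ∑ y : GaloisField 2 n, ∑ z : GaloisField 2 n,
          (if G x = G z then (2:ℤ)^n else 0) * (if G y = G z then (2:ℤ)^n else 0) := by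
        refine Finset.sum_congr rfl fun x _ => Finset.sum_congr rfl fun y _ =>
          Finset.sum_congr rfl fun z _ => ?_
        calc ∑ v₁ : GaloisField 2 n, ∑ v₂ : GaloisField 2 n,
              chi n (v₁ * G x) * chi n (v₂ * G y) * chi n ((v₁ + v₂) * G z)
            = ∑ v₁ : GaloisField 2 n, ∑ v₂ : GaloisField 2 n,
              chi n (v₁ * (G x + G z)) * chi n (v₂ * (G y + G z)) :=
              Finset.sum_congr rfl fun v₁ _ => Finset.sum_congr rfl fun v₂ _ => key _ _ _ _ _
          _ = (∑ v₁ : GaloisField 2 n, chi n (v₁ * (G x + G z))) *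
              (∑ v₂ : GaloisField 2 n, chi n (v₂ * (G y + G z))) :=
              (Finset.sum_mul_sum _ _ _ _).symm
          _ = (if G x = G z then (2:ℤ)^n else 0) * (if G y = G z then (2:ℤ)^n else 0) := by
              rw [sum_chi n hn, sum_chi n hn, addK_eq_zero, addK_eq_zero]
              congr 2 <;> [exact propext ⟨Eq.symm, Eq.symm⟩; exact propext ⟨Eq.symm, Eq.symm⟩]
    _ = ∑ z : GaloisField 2 n, ∑ x : GaloisField 2 n, ∑ y : GaloisField 2 n,
          (if G x = G z then (2:ℤ)^n else 0) * (if G y = G z then (2:ℤ)^n else 0) :=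
        sum_comm3 _
    _ = ∑ z : GaloisField 2 n, ((Nc n G (G z) : ℤ) * 2^n) * ((Nc n G (G z) : ℤ) * 2^n) := by
        refine Finset.sum_congr rfl fun z _ => ?_
        rw [← Finset.sum_mul_sum, ite_sum_count n G (G z)]
    _ = ∑ a : GaloisField 2 n, (Nc n G a : ℤ) *
          (((Nc n G a : ℤ) * 2^n) * ((Nc n G a : ℤ) * 2^n)) :=
        sum_fiber n G (fun a => ((Nc n G a : ℤ) * 2^n) * ((Nc n G a : ℤ) * 2^n))
    _ = 2^n * 2^n * ∑ a : GaloisField 2 n, (Nc n G a : ℤ)^3 := by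
        rw [Finset.mul_sum]; exact Finset.sum_congr rfl fun a _ => by ring

lemma W_eq (n : ℕ) (F : GaloisField 2 n → GaloisField 2 n) (b v : GaloisField 2 n) :
    W n F (b * v) v = ∑ x : GaloisField 2 n, chi n (v * (F x + b * x)) := by
  refine Finset.sum_congr rfl fun x _ => ?_
  unfold chi tr
  rw [show v * (F x + b * x) = v * F x + (b * v) * x by ring, map_add]

lemma natCard_eq_Nc (n : ℕ) (F : GaloisField 2 n → GaloisField 2 n)
    (b a : GaloisField 2 n) :
    Nat.card {x : GaloisField 2 n // F x + b * x = a}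
      = Nc n (fun x => F x + b * x) a := by
  rw [Nat.card_eq_fintype_card, Fintype.card_subtype]
  rfl

theorem o_polynomial_iff_walsh_moments (n : ℕ) (hn : 0 < n)
    (F : GaloisField 2 n → GaloisField 2 n) :
    IsOPoly n F ↔
      (∑ b ∈ univ.filter (fun b : GaloisField 2 n => b ≠ 0),
          ∑ v : GaloisField 2 n, W n F (b * v) v ^ 2 =
        ((2 : ℤ) ^ n - 1) * 2 ^ (2 * n + 1)) ∧
      (∑ b ∈ univ.filter (fun b : GaloisField 2 n => b ≠ 0),
          ∑ v₁ : GaloisField 2 n, ∑ v₂ : GaloisField 2 n,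
            W n F (b * v₁) v₁ * W n F (b * v₂) v₂ * W n F (b * (v₁ + v₂)) (v₁ + v₂) =
        ((2 : ℤ) ^ n - 1) * 2 ^ (3 * n + 2)) := by
  set G : GaloisField 2 n → GaloisField 2 n → GaloisField 2 n := fun b x => F x + b * x with hG
  have hM2 : ∀ b : GaloisField 2 n, ∑ v : GaloisField 2 n, W n F (b * v) v ^ 2
      = 2^n * ∑ a : GaloisField 2 n, (Nc n (G b) a : ℤ)^2 := by
    intro b
    rw [← moment2 n hn (G b)]
    exact Finset.sum_congr rfl fun v _ => by rw [W_eq]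
  have hM3 : ∀ b : GaloisField 2 n, (∑ v₁ : GaloisField 2 n, ∑ v₂ : GaloisField 2 n,
      W n F (b * v₁) v₁ * W n F (b * v₂) v₂ * W n F (b * (v₁ + v₂)) (v₁ + v₂))
      = 2^n * 2^n * ∑ a : GaloisField 2 n, (Nc n (G b) a : ℤ)^3 := by
    intro b
    rw [← moment3 n hn (G b)]
    refine Finset.sum_congr rfl fun v₁ _ => Finset.sum_congr rfl fun v₂ _ => ?_
    rw [W_eq, W_eq, W_eq]
  have hcardfil : ((univ.filter (fun b : GaloisField 2 n => b ≠ 0)).card : ℤ) = 2^n - 1 := by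
    rw [Finset.filter_ne' univ 0, Finset.card_erase_of_mem (mem_univ 0), Finset.card_univ,
      cardK n hn]
    have : (1:ℕ) ≤ 2^n := Nat.one_le_two_pow
    push_cast [Nat.cast_sub this]
    ring
  have hpow2 : (2:ℤ)^(2*n+1) = 2^n * (2 * 2^n) := by
    rw [show 2*n+1 = n + (n+1) by ring, pow_add, pow_succ]; ring
  have hpow3 : (2:ℤ)^(3*n+2) = 2^n * 2^n * (4 * 2^n) := by
    rw [show 3*n+2 = n + (n + (n+2)) by ring, pow_add, pow_add, pow_add]; ring
  constructor
  · intro h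
    have hN : ∀ b : GaloisField 2 n, b ≠ 0 → ∀ a : GaloisField 2 n, (Nc n (G b) a : ℤ) = 0 ∨ (Nc n (G b) a : ℤ) = 2 := by
      intro b hb a
      rcases h b hb a with h0 | h2
      · left; rw [natCard_eq_Nc] at h0; exact_mod_cast h0
      · right; rw [natCard_eq_Nc] at h2; exact_mod_cast h2
    constructor
    · rw [Finset.sum_congr rfl fun b hb => hM2 b]
      have : ∀ b ∈ univ.filter (fun b : GaloisField 2 n => b ≠ 0),
          (2:ℤ)^n * ∑ a : GaloisField 2 n, (Nc n (G b) a : ℤ)^2 = 2^n * (2 * 2^n) := by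
        intro b hb
        have hb' : b ≠ 0 := (Finset.mem_filter.mp hb).2
        congr 1
        have : ∑ a : GaloisField 2 n, (Nc n (G b) a : ℤ)^2 = ∑ a : GaloisField 2 n, 2 * (Nc n (G b) a : ℤ) :=
          Finset.sum_congr rfl fun a _ => by rcases hN b hb' a with h | h <;> rw [h] <;> norm_num
        rw [this, ← Finset.mul_sum, sum_Nc n hn]
      rw [Finset.sum_congr rfl this, Finset.sum_const, hpow2, nsmul_eq_mul, hcardfil]
    · rw [Finset.sum_congr rfl fun b hb => hM3 b]
      have : ∀ b ∈ univ.filter (fun b : GaloisField 2 n => b ≠ 0),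
          (2:ℤ)^n * 2^n * ∑ a : GaloisField 2 n, (Nc n (G b) a : ℤ)^3 = 2^n * 2^n * (4 * 2^n) := by
        intro b hb
        have hb' : b ≠ 0 := (Finset.mem_filter.mp hb).2
        congr 1
        have : ∑ a : GaloisField 2 n, (Nc n (G b) a : ℤ)^3 = ∑ a : GaloisField 2 n, 4 * (Nc n (G b) a : ℤ) :=
          Finset.sum_congr rfl fun a _ => by rcases hN b hb' a with h | h <;> rw [h] <;> norm_num
        rw [this, ← Finset.mul_sum, sum_Nc n hn]
      rw [Finset.sum_congr rfl this, Finset.sum_const, hpow3, nsmul_eq_mul, hcardfil]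
  · rintro ⟨h1, h2⟩
    rw [Finset.sum_congr rfl fun b _ => hM2 b] at h1
    rw [Finset.sum_congr rfl fun b _ => hM3 b] at h2
    have h2n : ((2:ℤ)^n) ≠ 0 := by positivity
    have hS2 : ∑ b ∈ univ.filter (fun b : GaloisField 2 n => b ≠ 0), ∑ a : GaloisField 2 n, (Nc n (G b) a : ℤ)^2
        = (2^n - 1) * (2 * 2^n) := by
      have h1' : (2:ℤ)^n * ∑ b ∈ univ.filter (fun b : GaloisField 2 n => b ≠ 0),
          ∑ a : GaloisField 2 n, (Nc n (G b) a : ℤ)^2 = (2^n - 1) * 2^(2*n+1) := by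
        rw [Finset.mul_sum]; exact h1
      exact mul_left_cancel₀ h2n (h1'.trans (by rw [hpow2]; ring))
    have hS3 : ∑ b ∈ univ.filter (fun b : GaloisField 2 n => b ≠ 0), ∑ a : GaloisField 2 n, (Nc n (G b) a : ℤ)^3
        = (2^n - 1) * (4 * 2^n) := by
      have h2' : ((2:ℤ)^n * 2^n) * ∑ b ∈ univ.filter (fun b : GaloisField 2 n => b ≠ 0),
          ∑ a : GaloisField 2 n, (Nc n (G b) a : ℤ)^3 = (2^n - 1) * 2^(3*n+2) := by
        rw [Finset.mul_sum]; exact h2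
      exact mul_left_cancel₀ (mul_ne_zero h2n h2n) (h2'.trans (by rw [hpow3]; ring))
    have hT : ∑ b ∈ univ.filter (fun b : GaloisField 2 n => b ≠ 0),
        ∑ a : GaloisField 2 n, (Nc n (G b) a : ℤ) * ((Nc n (G b) a : ℤ) - 2)^2 = 0 := by
      have expand : ∀ b : GaloisField 2 n, ∑ a : GaloisField 2 n, (Nc n (G b) a : ℤ) * ((Nc n (G b) a : ℤ) - 2)^2
          = (∑ a : GaloisField 2 n, (Nc n (G b) a : ℤ)^3) - 4 * (∑ a : GaloisField 2 n, (Nc n (G b) a : ℤ)^2)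
            + 4 * (2:ℤ)^n := by
        intro b
        rw [← sum_Nc n hn (G b), Finset.mul_sum, Finset.mul_sum, ← Finset.sum_sub_distrib,
          ← Finset.sum_add_distrib]
        exact Finset.sum_congr rfl fun a _ => by ring
      rw [Finset.sum_congr rfl fun b _ => expand b, Finset.sum_add_distrib,
        Finset.sum_sub_distrib, ← Finset.mul_sum, hS2, hS3, Finset.sum_const, nsmul_eq_mul,
        hcardfil]
      ring
    have hnn : ∀ b ∈ univ.filter (fun b : GaloisField 2 n => b ≠ 0), ∀ a : GaloisField 2 n,
        (0:ℤ) ≤ (Nc n (G b) a : ℤ) * ((Nc n (G b) a : ℤ) - 2)^2 :=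
      fun b _ a => mul_nonneg (Int.natCast_nonneg _) (sq_nonneg _)
    have hzero : ∀ b ∈ univ.filter (fun b : GaloisField 2 n => b ≠ 0), ∀ a : GaloisField 2 n,
        (Nc n (G b) a : ℤ) * ((Nc n (G b) a : ℤ) - 2)^2 = 0 := by
      intro b hb a
      have := (Finset.sum_eq_zero_iff_of_nonneg
        (fun b hb => Finset.sum_nonneg (fun a _ => hnn b hb a))).mp hT b hb
      exact (Finset.sum_eq_zero_iff_of_nonneg (fun a _ => hnn b hb a)).mp this a (mem_univ a)
    intro b hb a
    have hb' : b ∈ univ.filter (fun b : GaloisField 2 n => b ≠ 0) := Finset.mem_filter.mpr ⟨mem_univ b, hb⟩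
    rcases mul_eq_zero.mp (hzero b hb' a) with h | h
    · left; rw [natCard_eq_Nc]; exact_mod_cast h
    · right; rw [natCard_eq_Nc]
      have : (Nc n (G b) a : ℤ) = 2 := by nlinarith [sq_nonneg ((Nc n (G b) a : ℤ) - 2)]
      exact_mod_cast this
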